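/- Let Cat(m) = C(2m,m)/(m+1) denote the m-th Catalan number. Let T : ℕ → ℚ be any sequence, and let d : ℕ → ℚ satisfy d(0) = 0 and, for every q ≥ 0, d(q+1) = T(q+1) + 2·Σ_{k=0}^{q} Cat(q−k)·d(k). Then for every q ≥ 0, d(q+1) = Σ_{p=0}^{q} C(2(q−p), q−p)·T(p+1). -/

import Mathlib

open Finset

noncomputable def CatS : PowerSeries ℚ := PowerSeries.mk fun n => (catalan n : ℚ)
noncomputable def CBS : PowerSeries ℚ := PowerSeries.mk fun n => (Nat.centralBinom n : ℚ)

open PowerSeries in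
lemma hCatS : CatS = 1 + PowerSeries.X * CatS ^ 2 := by
  ext n
  cases n with
  | zero => simp [CatS]
  | succ n =>
    rw [map_add, PowerSeries.coeff_succ_X_mul, PowerSeries.coeff_one]
    simp only [Nat.succ_ne_zero, if_false, zero_add, sq, PowerSeries.coeff_mul]
    simp only [CatS, PowerSeries.coeff_mk, catalan_succ']
    push_cast
    rfl

open PowerSeries in
lemma hCBS : CBS = d⁄dX ℚ (PowerSeries.X * CatS) := by
  ext n
  rw [PowerSeries.coeff_derivative, PowerSeries.coeff_succ_X_mul]
  simp only [CBS, CatS, PowerSeries.coeff_mk]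
  rw [mul_comm]
  rw_mod_cast [succ_mul_catalan_eq_centralBinom]

open PowerSeries in
lemma hInv : CBS * (1 - 2 * PowerSeries.X * CatS) = 1 := by
  have hder : d⁄dX ℚ CatS = CatS ^ 2 + PowerSeries.X * (2 * CatS * d⁄dX ℚ CatS) := by
    conv_lhs => rw [hCatS]
    rw [map_add, Derivation.map_one_eq_zero, zero_add, Derivation.leibniz,
      Derivation.leibniz_pow]
    simp only [smul_eq_mul, PowerSeries.derivative_X, nsmul_eq_mul]
    push_cast
    ring
  have hx : PowerSeries.X * CatS ^ 2 = CatS - 1 := by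
    nth_rewrite 2 [hCatS]; ring
  have hkey : (1 - 2 * PowerSeries.X * CatS) * d⁄dX ℚ CatS = CatS ^ 2 := by
    nth_rewrite 1 [hder]; ring_nf
    nth_rewrite 1 [hder]; ring
  rw [hCBS, Derivation.leibniz]
  simp only [smul_eq_mul, PowerSeries.derivative_X, mul_one]
  calc (PowerSeries.X * d⁄dX ℚ CatS + CatS) * (1 - 2 * PowerSeries.X * CatS)
      = PowerSeries.X * ((1 - 2 * PowerSeries.X * CatS) * d⁄dX ℚ CatS)
        + CatS - 2 * PowerSeries.X * CatS * CatS := by ring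
    _ = CatS - PowerSeries.X * CatS ^ 2 := by rw [hkey]; ring
    _ = 1 := by rw [hx]; ring

/-- The key convolution identity. -/
lemma key_conv (n : ℕ) : (Nat.centralBinom (n + 1) : ℚ) =
    2 * ∑ i ∈ Finset.range (n + 1), (catalan i : ℚ) * (Nat.centralBinom (n - i) : ℚ) := by
  have hB : CBS = 1 + PowerSeries.C 2 * (PowerSeries.X * (CatS * CBS)) := by
    have h2 : (PowerSeries.C 2 : PowerSeries ℚ) = 2 := map_ofNat _ 2
    rw [h2]
    linear_combination hInv
  have h := congrArg (PowerSeries.coeff (n + 1)) hB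
  rw [map_add, PowerSeries.coeff_C_mul, PowerSeries.coeff_one, PowerSeries.coeff_succ_X_mul,
    PowerSeries.coeff_mul, Finset.Nat.sum_antidiagonal_eq_sum_range_succ_mk] at h
  simpa [CatS, CBS] using h

lemma ccat (m : ℕ) :
    ((Nat.choose (2 * m) m : ℚ)) / ((m : ℚ) + 1) = (catalan m : ℚ) := by
  have h := succ_mul_catalan_eq_centralBinom m
  have h' : ((m : ℚ) + 1) * (catalan m : ℚ) = (Nat.choose (2 * m) m : ℚ) := by
    exact_mod_cast congrArg (Nat.cast (R := ℚ)) h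
  rw [← h']
  field_simp

theorem perturbative_lemma_solution (T d : ℕ → ℚ)
    (h0 : d 0 = 0)
    (hrec : ∀ q : ℕ, d (q + 1) = T (q + 1) +
      2 * ∑ k ∈ Finset.range (q + 1),
        ((Nat.choose (2 * (q - k)) (q - k) : ℚ) / ((q - k : ℕ) + 1)) * d k) :
    ∀ q : ℕ, d (q + 1) =
      ∑ p ∈ Finset.range (q + 1), (Nat.choose (2 * (q - p)) (q - p) : ℚ) * T (p + 1) := by
  intro q
  induction q using Nat.strong_induction_on with
  | _ q ih =>
  rw [hrec q, Finset.sum_range_succ' _ q, h0, mul_zero, add_zero]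
  have hterm : ∀ k ∈ Finset.range q,
      ((Nat.choose (2 * (q - (k + 1))) (q - (k + 1)) : ℚ) / ((q - (k + 1) : ℕ) + 1)) * d (k + 1)
        = (catalan (q - (k + 1)) : ℚ) *
          ∑ p ∈ Finset.range (k + 1), (Nat.choose (2 * (k - p)) (k - p) : ℚ) * T (p + 1) := by
    intro k hk
    rw [ccat, ih k (Finset.mem_range.mp hk)]
  rw [Finset.sum_congr rfl hterm, Finset.sum_range_succ]
  have hmain : 2 * ∑ k ∈ Finset.range q, (catalan (q - (k + 1)) : ℚ) *
      ∑ p ∈ Finset.range (k + 1), (Nat.choose (2 * (k - p)) (k - p) : ℚ) * T (p + 1)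
      = ∑ p ∈ Finset.range q, (Nat.choose (2 * (q - p)) (q - p) : ℚ) * T (p + 1) := by
    rw [Finset.mul_sum]
    simp_rw [Finset.mul_sum]
    rw [Finset.sum_comm' (t' := Finset.range q) (s' := fun p => Finset.Ico p q)
      (by intro k p; simp only [Finset.mem_range, Finset.mem_Ico]; omega)]
    refine Finset.sum_congr rfl ?_
    intro p hp
    rw [Finset.mem_range] at hp
    rw [Finset.sum_Ico_eq_sum_range]
    obtain ⟨m, hm⟩ : ∃ m, q - p = m + 1 := ⟨q - p - 1, by omega⟩
    rw [hm]
    have hre : ∀ j ∈ Finset.range (m + 1),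
        2 * ((catalan (q - (p + j + 1)) : ℚ) *
          ((Nat.choose (2 * (p + j - p)) (p + j - p) : ℚ) * T (p + 1)))
        = ((catalan (m - j) : ℚ) * (Nat.centralBinom j : ℚ)) * (2 * T (p + 1)) := by
      intro j hj
      rw [Finset.mem_range] at hj
      have h1 : q - (p + j + 1) = m - j := by omega
      have h2 : p + j - p = j := by omega
      rw [h1, h2, Nat.centralBinom_eq_two_mul_choose]
      ring
    rw [Finset.sum_congr rfl hre, ← Finset.sum_mul]
    have hrefl := Finset.sum_range_reflect
      (fun i => (catalan i : ℚ) * (Nat.centralBinom (m - i) : ℚ)) (m + 1)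
    simp only [Nat.add_sub_cancel] at hrefl
    have : ∑ j ∈ Finset.range (m + 1), (catalan (m - j) : ℚ) * (Nat.centralBinom j : ℚ)
        = ∑ i ∈ Finset.range (m + 1), (catalan i : ℚ) * (Nat.centralBinom (m - i) : ℚ) := by
      rw [← hrefl]
      refine Finset.sum_congr rfl ?_
      intro j hj
      rw [Finset.mem_range] at hj
      rw [Nat.sub_sub_self (Nat.le_of_lt_succ hj)]
    rw [this]
    have hk := key_conv m
    rw [Nat.centralBinom_eq_two_mul_choose] at hk
    linear_combination (-(T (p + 1))) * hk
  rw [hmain]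
  simp [Nat.sub_self]
  ring
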